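/- If a coin system C = (1, c_2, c_3, c_4, c_5, c_6) is orderly, (1, c_2, c_3, c_4) is orderly, and (1, c_2, c_3, c_4, c_5) is not orderly, then c_5 ≤ 2·c_4 and c_6 ≤ 2·c_4. -/

import Mathlib

/-- The largest coin value in `C` that is at most `v` (or 0 if none). -/
def coinMax (C : List ℕ) (v : ℕ) : ℕ := (C.filter (· ≤ v)).foldr max 0

/-- Fuelled greedy coin count. -/
def grdAux (C : List ℕ) : ℕ → ℕ → ℕ
  | 0, _ => 0
  | fuel + 1, v =>
    let c := coinMax C v
    if v = 0 ∨ c = 0 then 0 else 1 + grdAux C fuel (v - c)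

/-- Number of coins used by the greedy algorithm to represent `v` with coin system `C`. -/
def grd (C : List ℕ) (v : ℕ) : ℕ := grdAux C v v

/-- The set of sizes of representations of `v` as nonnegative integer combinations of
the coin values in `C`. -/
def reprCosts (C : List ℕ) (v : ℕ) : Set ℕ :=
  {k | ∃ x : List ℕ, x.length = C.length ∧ (List.zipWith (· * ·) x C).sum = v ∧ x.sum = k}

/-- Minimum number of coins needed to represent `v` with coin system `C`. -/
noncomputable def opt (C : List ℕ) (v : ℕ) : ℕ := sInf (reprCosts C v)

/-- A coin system is orderly if greedy is optimal for every positive value. -/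
def Orderly (C : List ℕ) : Prop := ∀ v : ℕ, 0 < v → grd C v = opt C v

/-! ### foldr max lemmas -/

lemma le_foldr_max {l : List ℕ} {x : ℕ} (h : x ∈ l) : x ≤ l.foldr max 0 := by
  induction l with
  | nil => simp at h
  | cons a l ih =>
    rcases List.mem_cons.1 h with rfl | h
    · exact le_max_left _ _
    · exact le_trans (ih h) (le_max_right _ _)

lemma foldr_max_mem (l : List ℕ) : l.foldr max 0 = 0 ∨ l.foldr max 0 ∈ l := by
  induction l with
  | nil => simp
  | cons a l ih =>
    rcases le_total a (l.foldr max 0) with h | h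
    · rcases ih with h0 | hm
      · left; simp [List.foldr, max_eq_right h, h0] at *; omega
      · right; simp [List.foldr, max_eq_right h]; right; exact hm
    · right; simp [List.foldr, max_eq_left h]

/-! ### coinMax lemmas -/

lemma coinMax_mem {C : List ℕ} {v : ℕ} (h : coinMax C v ≠ 0) : coinMax C v ∈ C ∧ coinMax C v ≤ v := by
  rcases foldr_max_mem (C.filter (· ≤ v)) with h0 | hm
  · exact absurd h0 h
  · have := List.mem_filter.1 hm
    exact ⟨this.1, by simpa [coinMax] using this.2⟩

lemma le_coinMax {C : List ℕ} {v c : ℕ} (hc : c ∈ C) (hcv : c ≤ v) : c ≤ coinMax C v :=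
  le_foldr_max (List.mem_filter.2 ⟨hc, by simpa using hcv⟩)

lemma coinMax_append {C : List ℕ} {v d : ℕ} (h : v < d) : coinMax (C ++ [d]) v = coinMax C v := by
  unfold coinMax
  rw [List.filter_append]
  have : List.filter (· ≤ v) [d] = [] := by
    rw [List.filter_cons, List.filter_nil]
    simp only [decide_eq_true_eq]
    rw [if_neg (by omega)]
  rw [this, List.append_nil]

/-! ### grd lemmas -/

lemma grdAux_fuel {C : List ℕ} : ∀ f g v, v ≤ f → v ≤ g → grdAux C f v = grdAux C g v := by
  intro f
  induction f with
  | zero =>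
    intro g v hf _
    interval_cases v
    cases g <;> simp [grdAux]
  | succ f ih =>
    intro g v hf hg
    cases g with
    | zero => interval_cases v; cases f <;> simp [grdAux]
    | succ g =>
      show grdAux C (f+1) v = grdAux C (g+1) v
      unfold grdAux
      by_cases hc : v = 0 ∨ coinMax C v = 0
      · simp [hc]
      · simp only [hc, if_false]
        push_neg at hc
        have : v - coinMax C v < v := by
          have := hc.2
          omega
        rw [ih (v - coinMax C v) (g := g) (by omega) (by omega)]

lemma grd_zero (C : List ℕ) : grd C 0 = 0 := rfl

lemma grd_stop {C : List ℕ} {v : ℕ} (hc : coinMax C v = 0) : grd C v = 0 := by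
  cases v with
  | zero => rfl
  | succ n => unfold grd grdAux; simp [hc]

lemma grd_step {C : List ℕ} {v : ℕ} (hv : v ≠ 0) (hc : coinMax C v ≠ 0) :
    grd C v = 1 + grd C (v - coinMax C v) := by
  obtain ⟨n, rfl⟩ : ∃ n, v = n + 1 := ⟨v - 1, by omega⟩
  show grdAux C (n+1) (n+1) = _
  unfold grdAux
  simp only [hv, hc, or_self, if_false, false_or]
  congr 1
  exact grdAux_fuel n (n + 1 - coinMax C (n+1)) (n + 1 - coinMax C (n+1)) (by             
    have : 1 ≤ coinMax C (n+1) := by omega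
    omega) le_rfl

lemma grd_pos {C : List ℕ} {v : ℕ} (h1 : (1:ℕ) ∈ C) (hv : 0 < v) : 0 < grd C v := by
  have hc : coinMax C v ≠ 0 := by
    have := le_coinMax h1 (by omega : 1 ≤ v)
    omega
  rw [grd_step (by omega) hc]
  omega

lemma grd_append {C : List ℕ} {d : ℕ} : ∀ v, v < d → grd (C ++ [d]) v = grd C v := by
  intro v
  induction v using Nat.strong_induction_on with
  | _ v ih =>
    intro hvd
    rcases Nat.eq_zero_or_pos v with rfl | hv
    · rfl
    · by_cases hc : coinMax C v = 0
      · rw [grd_stop (by rw [coinMax_append hvd]; exact hc), grd_stop hc]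
      · rw [grd_step (by omega) (by rw [coinMax_append hvd]; exact hc),
          grd_step (by omega) hc, coinMax_append hvd]
        congr 1
        have hle := (coinMax_mem hc).2
        have h1 : 1 ≤ coinMax C v := by omega
        exact ih _ (by omega) (by omega)


/-! ### reprCosts lemmas -/

lemma sub_one_mul_add {a d : ℕ} (ha : 0 < a) : (a - 1) * d + d = a * d := by
  cases a with
  | zero => omega
  | succ n => simp [Nat.succ_sub_one, Nat.succ_mul]

lemma reprCosts_zero (C : List ℕ) : 0 ∈ reprCosts C 0 := by
  refine ⟨List.replicate C.length 0, by simp, ?_, by simp⟩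
  induction C with
  | nil => simp
  | cons d C ih => simpa [List.replicate_succ] using ih

lemma reprCosts_add_coin {C : List ℕ} {c : ℕ} (hc : c ∈ C) :
    ∀ {v k : ℕ}, k ∈ reprCosts C v → k + 1 ∈ reprCosts C (v + c) := by
  induction C with
  | nil => simp at hc
  | cons d C ih =>
    rintro v k ⟨x, hlen, hsum, hxs⟩
    cases x with
    | nil => simp at hlen
    | cons a x =>
      simp only [List.length_cons, Nat.add_right_cancel_iff] at hlen
      simp only [List.sum_cons] at hxs
      simp only [List.zipWith_cons_cons, List.sum_cons] at hsum
      rcases List.mem_cons.1 hc with rfl | hc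
      · refine ⟨(a+1) :: x, by simp [hlen], ?_, ?_⟩
        · simp only [List.zipWith_cons_cons, List.sum_cons, Nat.succ_mul]
          omega
        · simp only [List.sum_cons]; omega
      · obtain ⟨y, hl, hs, hys⟩ := ih hc (v := (List.zipWith (· * ·) x C).sum) (k := x.sum)
          ⟨x, hlen, rfl, rfl⟩
        refine ⟨a :: y, by simp [hl], ?_, ?_⟩
        · simp only [List.zipWith_cons_cons, List.sum_cons, hs]; omega
        · simp only [List.sum_cons, hys]; omega

lemma reprCosts_nonempty {C : List ℕ} (h1 : (1:ℕ) ∈ C) (v : ℕ) : (reprCosts C v).Nonempty := by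
  induction v with
  | zero => exact ⟨0, reprCosts_zero C⟩
  | succ n ih =>
    obtain ⟨k, hk⟩ := ih
    exact ⟨k + 1, reprCosts_add_coin h1 hk⟩

lemma opt_le {C : List ℕ} {v k : ℕ} (h : k ∈ reprCosts C v) : opt C v ≤ k := Nat.sInf_le h

lemma opt_mem {C : List ℕ} (h1 : (1:ℕ) ∈ C) (v : ℕ) : opt C v ∈ reprCosts C v :=
  Nat.sInf_mem (reprCosts_nonempty h1 v)

lemma opt_zero (C : List ℕ) : opt C 0 = 0 :=
  Nat.le_antisymm (opt_le (reprCosts_zero C)) (Nat.zero_le _)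

lemma opt_add_coin {C : List ℕ} {c : ℕ} (hc : c ∈ C) (h1 : (1:ℕ) ∈ C) (v : ℕ) :
    opt C (v + c) ≤ opt C v + 1 :=
  opt_le (reprCosts_add_coin hc (opt_mem h1 v))

lemma reprCosts_eq_zero {C : List ℕ} : ∀ {v : ℕ}, 0 ∈ reprCosts C v → v = 0 := by
  induction C with
  | nil => rintro v ⟨x, hlen, hsum, hxs⟩; simp at hsum; omega
  | cons d C ih =>
    rintro v ⟨x, hlen, hsum, hxs⟩
    cases x with
    | nil => simp at hlen
    | cons a x =>
      simp only [List.length_cons, Nat.add_right_cancel_iff] at hlen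
      simp only [List.sum_cons] at hxs
      simp only [List.zipWith_cons_cons, List.sum_cons] at hsum
      have ha : a = 0 := by omega
      have := ih (v := (List.zipWith (· * ·) x C).sum) ⟨x, hlen, rfl, by omega⟩
      subst ha
      omega

lemma reprCosts_one {C : List ℕ} : ∀ {v : ℕ}, 1 ∈ reprCosts C v → v ∈ C := by
  induction C with
  | nil =>
    rintro v ⟨x, hlen, hsum, hxs⟩
    simp at hlen; subst hlen; simp at hxs
  | cons d C ih =>
    rintro v ⟨x, hlen, hsum, hxs⟩
    cases x with
    | nil => simp at hlen
    | cons a x =>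
      simp only [List.length_cons, Nat.add_right_cancel_iff] at hlen
      simp only [List.sum_cons] at hxs
      simp only [List.zipWith_cons_cons, List.sum_cons] at hsum
      rcases Nat.eq_zero_or_pos a with rfl | ha
      · exact List.mem_cons_of_mem _ (ih ⟨x, hlen, by omega, by omega⟩)
      · have ha1 : a = 1 := by omega
        have hx0 : (List.zipWith (· * ·) x C).sum = 0 :=
          reprCosts_eq_zero (C := C) ⟨x, hlen, rfl, by omega⟩
        exact List.mem_cons.2 (Or.inl (by subst ha1; omega))

lemma reprCosts_split {C : List ℕ} :
    ∀ {v k : ℕ}, k ∈ reprCosts C v → k ≠ 0 →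
      ∃ c ∈ C, c ≤ v ∧ k - 1 ∈ reprCosts C (v - c) := by
  induction C with
  | nil =>
    rintro v k ⟨x, hlen, hsum, hxs⟩ hk
    simp at hlen; subst hlen; simp at hxs; omega
  | cons d C ih =>
    rintro v k ⟨x, hlen, hsum, hxs⟩ hk
    cases x with
    | nil => simp at hlen
    | cons a x =>
      simp only [List.length_cons, Nat.add_right_cancel_iff] at hlen
      simp only [List.sum_cons] at hxs
      simp only [List.zipWith_cons_cons, List.sum_cons] at hsum
      rcases Nat.eq_zero_or_pos a with rfl | ha
      · obtain ⟨c, hcC, hcv, y, hl, hs, hys⟩ := ih ⟨x, hlen, rfl, rfl⟩ (by omega)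
        refine ⟨c, List.mem_cons_of_mem _ hcC, by omega, 0 :: y, by simp [hl], ?_, ?_⟩
        · simp only [List.zipWith_cons_cons, List.sum_cons, hs]; omega
        · simp only [List.sum_cons, hys]; omega
      · have hdle : d ≤ a * d := Nat.le_mul_of_pos_left d ha
        have key : (a - 1) * d + d = a * d := sub_one_mul_add ha
        refine ⟨d, List.mem_cons_self, by omega, (a-1) :: x, by simp [hlen], ?_, ?_⟩
        · simp only [List.zipWith_cons_cons, List.sum_cons]; omega
        · simp only [List.sum_cons]; omega

lemma reprCosts_append_subset {C : List ℕ} {d v k : ℕ} (h : k ∈ reprCosts C v) :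
    k ∈ reprCosts (C ++ [d]) v := by
  obtain ⟨x, hlen, hsum, hxs⟩ := h
  refine ⟨x ++ [0], by simp [hlen], ?_, by simp [hxs]⟩
  rw [List.zipWith_append hlen]
  simp [hsum]

lemma reprCosts_append_cases {C : List ℕ} {d v k : ℕ} (h : k ∈ reprCosts (C ++ [d]) v) :
    k ∈ reprCosts C v ∨ (k ≠ 0 ∧ d ≤ v ∧ k - 1 ∈ reprCosts (C ++ [d]) (v - d)) := by
  obtain ⟨x, hlen, hsum, hxs⟩ := h
  have hx0 : x ≠ [] := by
    intro h; subst h; simp at hlen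
  obtain ⟨y, a, rfl⟩ : ∃ y a, x = y ++ [a] :=
    ⟨x.dropLast, x.getLast hx0, (List.dropLast_append_getLast hx0).symm⟩
  have hylen : y.length = C.length := by simp at hlen; omega
  rw [List.zipWith_append hylen] at hsum
  simp only [List.zipWith_cons_cons, List.zipWith_nil_right, List.sum_append, List.sum_cons,
    List.sum_nil] at hsum
  simp only [List.sum_append, List.sum_cons, List.sum_nil] at hxs
  rcases Nat.eq_zero_or_pos a with rfl | ha
  · left
    refine ⟨y, hylen, ?_, ?_⟩ <;> omega
  · right
    have hdle : d ≤ a * d := Nat.le_mul_of_pos_left d ha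
    have key : (a - 1) * d + d = a * d := sub_one_mul_add ha
    refine ⟨by omega, by omega, y ++ [a-1], by simp [hylen], ?_, ?_⟩
    · rw [List.zipWith_append hylen]
      simp only [List.zipWith_cons_cons, List.zipWith_nil_right, List.sum_append, List.sum_cons,
        List.sum_nil]
      omega
    · simp only [List.sum_append, List.sum_cons, List.sum_nil]; omega

lemma reprCosts_append_lt {C : List ℕ} {d v k : ℕ} (hv : v < d)
    (h : k ∈ reprCosts (C ++ [d]) v) : k ∈ reprCosts C v := by
  rcases reprCosts_append_cases h with h | ⟨_, hdv, _⟩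
  · exact h
  · omega


lemma opt_le_grd {C : List ℕ} (h1 : (1:ℕ) ∈ C) : ∀ v, opt C v ≤ grd C v := by
  intro v
  induction v using Nat.strong_induction_on with
  | _ v ih =>
    rcases Nat.eq_zero_or_pos v with rfl | hv
    · rw [grd_zero, opt_zero]
    · have hc : coinMax C v ≠ 0 := by
        have := le_coinMax h1 (by omega : 1 ≤ v)
        omega
      obtain ⟨hmem, hle⟩ := coinMax_mem hc
      rw [grd_step (by omega) hc]
      have h1' : opt C v ≤ opt C (v - coinMax C v) + 1 := by
        have := opt_add_coin hmem h1 (v - coinMax C v)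
        rwa [Nat.sub_add_cancel hle] at this
      have h2' := ih (v - coinMax C v) (by omega)
      omega

theorem stmt_14 (c₂ c₃ c₄ c₅ c₆ : ℕ)
    (h2 : 1 < c₂) (h3 : c₂ < c₃) (h4 : c₃ < c₄) (h5 : c₄ < c₅) (h6 : c₅ < c₆)
    (hord6 : Orderly [1, c₂, c₃, c₄, c₅, c₆])
    (hord4 : Orderly [1, c₂, c₃, c₄])
    (hnot5 : ¬ Orderly [1, c₂, c₃, c₄, c₅]) :
    c₅ ≤ 2 * c₄ ∧ c₆ ≤ 2 * c₄ := by
  classical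
  have h1₄ : (1:ℕ) ∈ [1, c₂, c₃, c₄] := by simp
  have h1₅ : (1:ℕ) ∈ [1, c₂, c₃, c₄, c₅] := by simp
  have h1₆ : (1:ℕ) ∈ [1, c₂, c₃, c₄, c₅, c₆] := by simp
  -- coinMax evaluation lemmas
  have hcm5 : ∀ v, c₅ ≤ v → coinMax [1, c₂, c₃, c₄, c₅] v = c₅ := by
    intro v hv
    have hub := le_coinMax (show c₅ ∈ [1, c₂, c₃, c₄, c₅] by simp) hv
    have hne : coinMax [1, c₂, c₃, c₄, c₅] v ≠ 0 := by omega
    obtain ⟨hmem, hle⟩ := coinMax_mem hne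
    simp only [List.mem_cons, List.mem_singleton, List.not_mem_nil, or_false] at hmem
    rcases hmem with h|h|h|h|h <;> omega
  have hcm4 : ∀ v, c₄ ≤ v → coinMax [1, c₂, c₃, c₄] v = c₄ := by
    intro v hv
    have hub := le_coinMax (show c₄ ∈ [1, c₂, c₃, c₄] by simp) hv
    have hne : coinMax [1, c₂, c₃, c₄] v ≠ 0 := by omega
    obtain ⟨hmem, hle⟩ := coinMax_mem hne
    simp only [List.mem_cons, List.mem_singleton, List.not_mem_nil, or_false] at hmem
    rcases hmem with h|h|h|h <;> omega
  have hcm6 : ∀ v, c₆ ≤ v → coinMax [1, c₂, c₃, c₄, c₅, c₆] v = c₆ := by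
    intro v hv
    have hub := le_coinMax (show c₆ ∈ [1, c₂, c₃, c₄, c₅, c₆] by simp) hv
    have hne : coinMax [1, c₂, c₃, c₄, c₅, c₆] v ≠ 0 := by omega
    obtain ⟨hmem, hle⟩ := coinMax_mem hne
    simp only [List.mem_cons, List.mem_singleton, List.not_mem_nil, or_false] at hmem
    rcases hmem with h|h|h|h|h|h <;> omega
  have hcm6mid : ∀ v, c₄ ≤ v → v < c₅ → coinMax [1, c₂, c₃, c₄, c₅, c₆] v = c₄ := by
    intro v hv hv'
    have hub := le_coinMax (show c₄ ∈ [1, c₂, c₃, c₄, c₅, c₆] by simp) hv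
    have hne : coinMax [1, c₂, c₃, c₄, c₅, c₆] v ≠ 0 := by omega
    obtain ⟨hmem, hle⟩ := coinMax_mem hne
    simp only [List.mem_cons, List.mem_singleton, List.not_mem_nil, or_false] at hmem
    rcases hmem with h|h|h|h|h|h <;> omega
  have gstep5 : ∀ v, c₅ ≤ v → grd [1, c₂, c₃, c₄, c₅] v = 1 + grd [1, c₂, c₃, c₄, c₅] (v - c₅) := by
    intro v hv
    have h := grd_step (C := [1, c₂, c₃, c₄, c₅]) (v := v) (by omega)
      (by rw [hcm5 v hv]; omega)
    rwa [hcm5 v hv] at h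
  have gstep4 : ∀ v, c₄ ≤ v → grd [1, c₂, c₃, c₄] v = 1 + grd [1, c₂, c₃, c₄] (v - c₄) := by
    intro v hv
    have h := grd_step (C := [1, c₂, c₃, c₄]) (v := v) (by omega) (by rw [hcm4 v hv]; omega)
    rwa [hcm4 v hv] at h
  -- extract minimal counterexample
  unfold Orderly at hnot5
  push_neg at hnot5
  have hex : ∃ v, 0 < v ∧ grd [1, c₂, c₃, c₄, c₅] v ≠ opt [1, c₂, c₃, c₄, c₅] v := hnot5
  set w := Nat.find hex with hw
  obtain ⟨hwpos, hwne⟩ := Nat.find_spec hex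
  have hmin : ∀ u, 0 < u → u < w → grd [1, c₂, c₃, c₄, c₅] u = opt [1, c₂, c₃, c₄, c₅] u := by
    intro u hu hltw
    by_contra hne
    exact Nat.find_min hex hltw ⟨hu, hne⟩
  have hgt : opt [1, c₂, c₃, c₄, c₅] w < grd [1, c₂, c₃, c₄, c₅] w :=
    lt_of_le_of_ne (opt_le_grd h1₅ w) (Ne.symm hwne)
  -- Step 3 : c₆ ≤ w
  have hc6w : c₆ ≤ w := by
    by_contra hlt
    push_neg at hlt
    have e1 : grd [1, c₂, c₃, c₄, c₅, c₆] w = grd [1, c₂, c₃, c₄, c₅] w :=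
      grd_append (C := [1, c₂, c₃, c₄, c₅]) (d := c₆) w hlt
    have e2 : opt [1, c₂, c₃, c₄, c₅, c₆] w ≤ opt [1, c₂, c₃, c₄, c₅] w :=
      opt_le (reprCosts_append_subset (C := [1, c₂, c₃, c₄, c₅]) (d := c₆) (opt_mem h1₅ w))
    have e3 := hord6 w hwpos
    omega
  -- Step 4 : w < c₄ + c₅ (Kozen–Zaks)
  have hKZ : w < c₄ + c₅ := by
    by_contra hge
    push_neg at hge
    have hk0 : opt [1, c₂, c₃, c₄, c₅] w ≠ 0 := by
      intro h0
      have := reprCosts_eq_zero (C := [1, c₂, c₃, c₄, c₅]) (h0 ▸ opt_mem h1₅ w)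
      omega
    obtain ⟨c, hcC, hcw, hmem'⟩ := reprCosts_split (opt_mem h1₅ w) hk0
    have hoptwc : opt [1, c₂, c₃, c₄, c₅] (w - c) ≤ opt [1, c₂, c₃, c₄, c₅] w - 1 := opt_le hmem'
    have hstepw := gstep5 w (by omega)
    have hm1 : grd [1, c₂, c₃, c₄, c₅] (w - c₅) = opt [1, c₂, c₃, c₄, c₅] (w - c₅) :=
      hmin _ (by omega) (by omega)
    have hcrange : c = c₅ ∨ (1 ≤ c ∧ c ≤ c₄) := by
      simp only [List.mem_cons, List.mem_singleton, List.not_mem_nil, or_false] at hcC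
      rcases hcC with h|h|h|h|h <;> omega
    rcases hcrange with rfl | ⟨hc1, hc4⟩
    · omega
    · have h2' : opt [1, c₂, c₃, c₄, c₅] (w - c₅) ≤ opt [1, c₂, c₃, c₄, c₅] (w - c₅ - c) + 1 := by
        have := opt_add_coin hcC h1₅ (w - c₅ - c)
        rwa [Nat.sub_add_cancel (by omega)] at this
      have h3' := opt_le_grd h1₅ (w - c₅ - c)
      have hstepwc := gstep5 (w - c) (by omega)
      have heq : w - c₅ - c = w - c - c₅ := by omega
      rw [heq] at h2' h3'
      have hm2 : grd [1, c₂, c₃, c₄, c₅] (w - c) = opt [1, c₂, c₃, c₄, c₅] (w - c) :=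
        hmin _ (by omega) (by omega)
      omega
  -- Step 5 : c₅ ≤ 2 * c₄
  have hp1 : c₅ ≤ 2 * c₄ := by
    by_contra h25
    push_neg at h25
    have hstep1 : grd [1, c₂, c₃, c₄, c₅, c₆] (2 * c₅)
        = 1 + grd [1, c₂, c₃, c₄, c₅, c₆] (2 * c₅ - c₆) := by
      have h := grd_step (C := [1, c₂, c₃, c₄, c₅, c₆]) (v := 2 * c₅) (by omega)
        (by rw [hcm6 _ (by omega)]; omega)
      rwa [hcm6 _ (by omega)] at h
    have hr1 : c₄ ≤ 2 * c₅ - c₆ := by omega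
    have hr2 : 2 * c₅ - c₆ < c₅ := by omega
    have hstep2 : grd [1, c₂, c₃, c₄, c₅, c₆] (2 * c₅ - c₆)
        = 1 + grd [1, c₂, c₃, c₄, c₅, c₆] (2 * c₅ - c₆ - c₄) := by
      have h := grd_step (C := [1, c₂, c₃, c₄, c₅, c₆]) (v := 2 * c₅ - c₆) (by omega)
        (by rw [hcm6mid _ hr1 hr2]; omega)
      rwa [hcm6mid _ hr1 hr2] at h
    have hposrem : 0 < grd [1, c₂, c₃, c₄, c₅, c₆] (2 * c₅ - c₆ - c₄) :=
      grd_pos h1₆ (by omega)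
    have hle2 : opt [1, c₂, c₃, c₄, c₅, c₆] (2 * c₅) ≤ 2 := by
      have ha := reprCosts_add_coin (show c₅ ∈ [1, c₂, c₃, c₄, c₅, c₆] by simp)
        (reprCosts_add_coin (show c₅ ∈ [1, c₂, c₃, c₄, c₅, c₆] by simp)
          (reprCosts_zero [1, c₂, c₃, c₄, c₅, c₆]))
      have heq : 0 + c₅ + c₅ = 2 * c₅ := by omega
      rw [heq] at ha
      exact opt_le ha
    have := hord6 (2 * c₅) (by omega)
    omega
  -- Step 6 : c₆ ≤ 2 * c₄
  have hp2 : c₆ ≤ 2 * c₄ := by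
    by_contra h26
    push_neg at h26
    have hw2c4 : 2 * c₄ < w := by omega
    have hc5w : c₅ < w := by omega
    -- opt C5 w = opt C4 w
    have he45 : opt [1, c₂, c₃, c₄, c₅] w = opt [1, c₂, c₃, c₄] w := by
      rcases reprCosts_append_cases (C := [1, c₂, c₃, c₄]) (d := c₅) (opt_mem h1₅ w) with
        hc4mem | ⟨hk0, hc5w', hmem'⟩
      · have hle1 : opt [1, c₂, c₃, c₄] w ≤ opt [1, c₂, c₃, c₄, c₅] w := opt_le hc4mem
        have hle2 : opt [1, c₂, c₃, c₄, c₅] w ≤ opt [1, c₂, c₃, c₄] w :=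
          opt_le (reprCosts_append_subset (C := [1, c₂, c₃, c₄]) (d := c₅) (opt_mem h1₄ w))
        omega
      · exfalso
        have hle : opt [1, c₂, c₃, c₄, c₅] (w - c₅) ≤ opt [1, c₂, c₃, c₄, c₅] w - 1 :=
          opt_le hmem'
        have hstepw := gstep5 w (by omega)
        have hm1 : grd [1, c₂, c₃, c₄, c₅] (w - c₅) = opt [1, c₂, c₃, c₄, c₅] (w - c₅) :=
          hmin _ (by omega) (by omega)
        omega
    -- grd C4 w = 2 + grd C4 t
    have hg4a := gstep4 w (by omega)
    have hg4b := gstep4 (w - c₄) (by omega)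
    have heqt : w - c₄ - c₄ = w - 2 * c₄ := by omega
    rw [heqt] at hg4b
    have hordw := hord4 w hwpos
    -- grd C4 t = opt C5 t
    have hgt45 : grd [1, c₂, c₃, c₄] (w - 2 * c₄) = grd [1, c₂, c₃, c₄, c₅] (w - 2 * c₄) :=
      (grd_append (C := [1, c₂, c₃, c₄]) (d := c₅) _ (by omega)).symm
    have hmint : grd [1, c₂, c₃, c₄, c₅] (w - 2 * c₄) = opt [1, c₂, c₃, c₄, c₅] (w - 2 * c₄) :=
      hmin _ (by omega) (by omega)
    have hstepw := gstep5 w (by omega)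
    have hmins : grd [1, c₂, c₃, c₄, c₅] (w - c₅) = opt [1, c₂, c₃, c₄, c₅] (w - c₅) :=
      hmin _ (by omega) (by omega)
    -- key inequality
    have hA : opt [1, c₂, c₃, c₄, c₅] (w - c₅) ≥ 2 + opt [1, c₂, c₃, c₄, c₅] (w - 2 * c₄) := by
      omega
    -- case analysis on e = 2*c₄ - c₅
    by_cases hecoin : (2 * c₄ - c₅) ∈ [1, c₂, c₃, c₄, c₅]
    · rcases Nat.eq_zero_or_pos (2 * c₄ - c₅) with he0 | hepos
      · have : w - c₅ = w - 2 * c₄ := by omega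
        rw [this] at hA
        omega
      · have hsplit : w - c₅ = (w - 2 * c₄) + (2 * c₄ - c₅) := by omega
        have := opt_add_coin hecoin h1₅ (w - 2 * c₄)
        rw [← hsplit] at this
        omega
    · have hene : 2 * c₄ - c₅ ≠ 0 := by
        intro h0
        have : w - c₅ = w - 2 * c₄ := by omega
        rw [this] at hA
        omega
      -- 2*c₄ is a counterexample smaller than w
      have hstep2c4 := gstep5 (2 * c₄) hp1
      have hmine : grd [1, c₂, c₃, c₄, c₅] (2 * c₄ - c₅) = opt [1, c₂, c₃, c₄, c₅] (2 * c₄ - c₅) :=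
        hmin _ (by omega) (by omega)
      have hopte2 : 2 ≤ opt [1, c₂, c₃, c₄, c₅] (2 * c₄ - c₅) := by
        by_contra hlt
        push_neg at hlt
        have ho := opt_mem h1₅ (2 * c₄ - c₅)
        have hcases : opt [1, c₂, c₃, c₄, c₅] (2 * c₄ - c₅) = 0 ∨
            opt [1, c₂, c₃, c₄, c₅] (2 * c₄ - c₅) = 1 := by omega
        rcases hcases with h | h <;> rw [h] at ho
        · exact hene (reprCosts_eq_zero ho)
        · exact hecoin (reprCosts_one ho)
      have hle2c4 : opt [1, c₂, c₃, c₄, c₅] (2 * c₄) ≤ 2 := by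
        have ha := reprCosts_add_coin (show c₄ ∈ [1, c₂, c₃, c₄, c₅] by simp)
          (reprCosts_add_coin (show c₄ ∈ [1, c₂, c₃, c₄, c₅] by simp)
            (reprCosts_zero [1, c₂, c₃, c₄, c₅]))
        have heq : 0 + c₄ + c₄ = 2 * c₄ := by omega
        rw [heq] at ha
        exact opt_le ha
      have hminw : grd [1, c₂, c₃, c₄, c₅] (2 * c₄) = opt [1, c₂, c₃, c₄, c₅] (2 * c₄) :=
        hmin _ (by omega) hw2c4
      omega
  exact ⟨hp1, hp2⟩
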